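/- Let G be a locally compact Hausdorff topological group. Then the following are equivalent: (1) G is σ-compact (a countable union of compact subsets); (2) every open subgroup of G has countable index in G; (3) G has an open subgroup H of countable index in G which is almost connected (i.e. H/H° is compact, where H° is the identity component of H). -/

import Mathlib

open Set Filter TopologicalSpace
open scoped Pointwise Topology

namespace SigmaTFAE

lemma isCompact_pow {G : Type*} [TopologicalSpace G] [Monoid G] [ContinuousMul G]
    {V : Set G} (hV : IsCompact V) : ∀ n : ℕ, IsCompact (V ^ (n + 1))
  | 0 => by simpa using hV
  | n + 1 => by rw [pow_succ]; exact (isCompact_pow hV n).mul hV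

/-- Every weakly locally compact topological group has an open σ-compact subgroup. -/
lemma exists_isOpen_isSigmaCompact_subgroup (G : Type*) [TopologicalSpace G] [Group G]
    [IsTopologicalGroup G] [WeaklyLocallyCompactSpace G] :
    ∃ H : Subgroup G, IsOpen (H : Set G) ∧ IsSigmaCompact (H : Set G) := by
  obtain ⟨K, hK, hK1⟩ := exists_compact_mem_nhds (1 : G)
  set V : Set G := K ∪ K⁻¹ with hVdef
  have hVc : IsCompact V := hK.union hK.inv
  have hVinv : V⁻¹ = V := by
    ext x
    simp only [hVdef, Set.mem_inv, Set.mem_union]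
    constructor <;> rintro (h | h) <;> simp_all [Set.mem_inv, or_comm]
  have hV1 : V ∈ 𝓝 (1 : G) := Filter.mem_of_superset hK1 subset_union_left
  let S : Subgroup G :=
  { carrier := ⋃ n, V ^ (n + 1)
    mul_mem' := fun ha hb ↦ by
      rcases mem_iUnion.mp ha with ⟨k, hk⟩
      rcases mem_iUnion.mp hb with ⟨l, hl⟩
      exact mem_iUnion.mpr ⟨k + 1 + l, by
        rw [add_assoc, pow_add]; exact Set.mul_mem_mul hk hl⟩
    one_mem' := mem_iUnion.mpr ⟨0, by simpa using mem_of_mem_nhds hV1⟩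
    inv_mem' := fun ha ↦ by
      rcases mem_iUnion.mp ha with ⟨k, hk⟩
      exact mem_iUnion.mpr ⟨k, by
        rw [← hVinv]
        simpa only [inv_pow, Set.mem_inv, inv_inv] using hk⟩ }
  have hmem : (S : Set G) ∈ 𝓝 (1 : G) :=
    Filter.mem_of_superset hV1 (fun x hx ↦ mem_iUnion.mpr ⟨0, by simpa using hx⟩)
  exact ⟨S, Subgroup.isOpen_of_mem_nhds S hmem,
    ⟨fun n ↦ V ^ (n + 1), fun n ↦ isCompact_pow hVc n, rfl⟩⟩

/-- If `G` has a σ-compact subgroup of countable index, then `G` is σ-compact. -/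
lemma sigmaCompactSpace_of_countable_index {G : Type*} [TopologicalSpace G] [Group G]
    [IsTopologicalGroup G] (H : Subgroup G) (hs : IsSigmaCompact (H : Set G))
    (hc : Countable (G ⧸ H)) : SigmaCompactSpace G := by
  rw [← isSigmaCompact_univ_iff]
  have : (univ : Set G) = ⋃ q : G ⧸ H, (Quotient.out q) • (H : Set G) := by
    refine (Set.eq_univ_of_forall fun g ↦ ?_).symm
    refine mem_iUnion.mpr ⟨QuotientGroup.mk g,
      Set.mem_smul_set.mpr ⟨(Quotient.out (QuotientGroup.mk g))⁻¹ * g, ?_, mul_inv_cancel_left _ _⟩⟩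
    exact (QuotientGroup.eq).mp (by simp [Quotient.out_eq])
  rw [this]
  refine isSigmaCompact_iUnion _ fun q ↦ ?_
  have himg : (Quotient.out q) • (H : Set G) = (fun x ↦ Quotient.out q * x) '' (H : Set G) := by
    ext x
    constructor
    · rintro ⟨y, hy, rfl⟩; exact ⟨y, hy, rfl⟩
    · rintro ⟨y, hy, rfl⟩; exact ⟨y, hy, rfl⟩
  rw [himg]
  exact hs.image (continuous_mul_left (Quotient.out q))

/-- In a σ-compact group, every open subgroup has countable index. -/
lemma countable_index_of_sigmaCompact {G : Type*} [TopologicalSpace G] [Group G]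
    [IsTopologicalGroup G] [SigmaCompactSpace G] (H : Subgroup G) (hH : IsOpen (H : Set G)) :
    Countable (G ⧸ H) := by
  have hd : DiscreteTopology (G ⧸ H) := by
    refine discreteTopology_iff_isOpen_singleton.mpr fun q ↦ ?_
    have hset : ({q} : Set (G ⧸ H)) = QuotientGroup.mk '' ((Quotient.out q) • (H : Set G)) := by
      ext p
      simp only [mem_singleton_iff, Set.mem_image]
      constructor
      · rintro rfl
        exact ⟨Quotient.out p, Set.mem_smul_set.mpr ⟨1, one_mem H, by simp⟩, Quotient.out_eq p⟩
      · rintro ⟨x, hx, rfl⟩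
        obtain ⟨h, hh, rfl⟩ := Set.mem_smul_set.mp hx
        rw [← Quotient.out_eq q]
        exact (QuotientGroup.eq.mpr (by simpa using H.inv_mem hh)).symm
    rw [hset]
    exact QuotientGroup.isOpenMap_coe _ (hH.smul _)
  have : IsSigmaCompact (univ : Set (G ⧸ H)) := by
    simpa using (isSigmaCompact_univ (X := G)).image continuous_quotient_mk'
  obtain ⟨C, hC, hU⟩ := this
  rw [← Set.countable_univ_iff, ← hU]
  exact Set.countable_iUnion fun n ↦ ((hC n).finite DiscreteTopology.isDiscrete).countable


/-- Preimage of a preconnected set under an open map with preconnected fibers. -/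
lemma preimage_preconnected {X Y : Type*} [TopologicalSpace X] [TopologicalSpace Y]
    {f : X → Y} {s : Set Y} (hs : IsPreconnected s) (hf : IsOpenMap f)
    (hsf : s ⊆ range f) (hfib : ∀ y ∈ s, IsPreconnected (f ⁻¹' {y})) :
    IsPreconnected (f ⁻¹' s) := by
  intro u v hu hv hsuv hsu hsv
  obtain ⟨y, hys, ⟨x1, hx1u, hfx1⟩, ⟨x2, hx2v, hfx2⟩⟩ :
      (s ∩ (f '' u ∩ f '' v)).Nonempty := by
    refine hs (f '' u) (f '' v) (hf u hu) (hf v hv) ?_ ?_ ?_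
    · intro y hy
      obtain ⟨x, rfl⟩ := hsf hy
      rcases hsuv (mem_preimage.mpr hy) with h | h
      exacts [Or.inl ⟨x, h, rfl⟩, Or.inr ⟨x, h, rfl⟩]
    · obtain ⟨a, haP, hau⟩ := hsu
      exact ⟨f a, haP, ⟨a, hau, rfl⟩⟩
    · obtain ⟨b, hbP, hbv⟩ := hsv
      exact ⟨f b, hbP, ⟨b, hbv, rfl⟩⟩
  have hFsub : f ⁻¹' {y} ⊆ u ∪ v := fun x hx ↦ hsuv (by
    simp only [mem_preimage, mem_singleton_iff] at hx
    simpa [mem_preimage, hx] using hys)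
  obtain ⟨z, hzF, hzuv⟩ := hfib y hys u v hu hv hFsub ⟨x1, hfx1, hx1u⟩ ⟨x2, hfx2, hx2v⟩
  exact ⟨z, by simpa [mem_preimage, mem_singleton_iff.mp hzF] using hys, hzuv⟩

instance connectedComponentOfOne_normal (G : Type*) [TopologicalSpace G] [Group G]
    [IsTopologicalGroup G] : (Subgroup.connectedComponentOfOne G).Normal := by
  constructor
  intro n hn g
  have hc : Continuous fun x : G ↦ g * x * g⁻¹ := (continuous_mul_left g).mul continuous_const
  have := hc.image_connectedComponent_subset 1
  have hmem : g * n * g⁻¹ ∈ connectedComponent (g * 1 * g⁻¹) := this ⟨n, hn, rfl⟩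
  exact (by simpa using hmem : g * n * g⁻¹ ∈ connectedComponent (1 : G))

lemma connectedComponent_eq_singleton {Γ : Type*} [TopologicalSpace Γ] [Group Γ]
    [IsTopologicalGroup Γ] (h : connectedComponent (1 : Γ) = {1}) (x : Γ) :
    connectedComponent x = {x} := by
  apply Subset.antisymm
  · intro y hy
    have hmem : x⁻¹ * y ∈ connectedComponent (x⁻¹ * x) :=
      (continuous_mul_left x⁻¹).image_connectedComponent_subset x ⟨y, hy, rfl⟩
    rw [inv_mul_cancel, h, mem_singleton_iff] at hmem
    have : y = x := by
      have := congrArg (fun z ↦ x * z) hmem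
      simpa [mul_inv_cancel_left] using this
    simp [this]
  · simpa using mem_connectedComponent

lemma totallyDisconnected_quotient (G : Type*) [TopologicalSpace G] [Group G]
    [IsTopologicalGroup G] :
    TotallyDisconnectedSpace (G ⧸ Subgroup.connectedComponentOfOne G) := by
  set N := Subgroup.connectedComponentOfOne G with hN
  rw [totallyDisconnectedSpace_iff_connectedComponent_singleton]
  have key : connectedComponent (1 : G ⧸ N) = {1} := by
    have hopen : IsOpenMap (QuotientGroup.mk : G → G ⧸ N) := QuotientGroup.isOpenMap_coe
    have hfib : ∀ y : G ⧸ N, IsPreconnected ((QuotientGroup.mk : G → G ⧸ N) ⁻¹' {y}) := by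
      intro y
      have hfeq : (QuotientGroup.mk : G → G ⧸ N) ⁻¹' {y}
          = (fun x ↦ Quotient.out y * x) '' connectedComponent (1 : G) := by
        ext x
        simp only [mem_preimage, mem_singleton_iff, mem_image]
        constructor
        · intro hx
          refine ⟨(Quotient.out y)⁻¹ * x, ?_, by simp⟩
          have hout : (QuotientGroup.mk (Quotient.out y) : G ⧸ N) = y := Quotient.out_eq y
          exact QuotientGroup.eq.mp (hout.trans hx.symm)
        · rintro ⟨n, hn, rfl⟩
          have hmem : (Quotient.out y)⁻¹ * (Quotient.out y * n) ∈ N := by have hn' : n ∈ N := hn; simpa using hn'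
          exact ((QuotientGroup.eq.mpr hmem).symm).trans (Quotient.out_eq y)
      rw [hfeq]
      exact isPreconnected_connectedComponent.image _ (continuous_mul_left _).continuousOn
    have hP : IsPreconnected ((QuotientGroup.mk : G → G ⧸ N) ⁻¹' connectedComponent 1) :=
      preimage_preconnected isPreconnected_connectedComponent hopen
        (fun y _ ↦ QuotientGroup.mk_surjective y) (fun y _ ↦ hfib y)
    have hone : (1 : G) ∈ (QuotientGroup.mk : G → G ⧸ N) ⁻¹' connectedComponent 1 := by
      simp only [mem_preimage]
      exact mem_connectedComponent
    have hsub : (QuotientGroup.mk : G → G ⧸ N) ⁻¹' connectedComponent 1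
        ⊆ connectedComponent (1 : G) := by
      have := hP.subset_connectedComponent hone
      simpa using this
    apply Subset.antisymm
    · intro y hy
      obtain ⟨x, rfl⟩ := QuotientGroup.mk_surjective y
      have hxN : x ∈ N := hsub (mem_preimage.mpr hy)
      simpa [mem_singleton_iff] using (QuotientGroup.eq_one_iff x).mpr hxN
    · simpa using mem_connectedComponent
  exact connectedComponent_eq_singleton key


/-- van Dantzig: a locally compact Hausdorff totally disconnected group has a compact open
subgroup. -/
lemma exists_compact_open_subgroup (Q : Type*) [TopologicalSpace Q] [Group Q]
    [IsTopologicalGroup Q] [T2Space Q] [LocallyCompactSpace Q] [TotallyDisconnectedSpace Q] :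
    ∃ K : Subgroup Q, IsOpen (K : Set Q) ∧ IsCompact (K : Set Q) := by
  obtain ⟨W0, hW0c, hW0⟩ := exists_compact_mem_nhds (1 : Q)
  obtain ⟨W, hWclopen, h1W, hWsub⟩ :=
    loc_compact_Haus_tot_disc_of_zero_dim.mem_nhds_iff.mp (interior_mem_nhds.mpr hW0)
  replace hWclopen : IsClopen W := hWclopen
  have hWcompact : IsCompact W :=
    hW0c.of_isClosed_subset hWclopen.isClosed (hWsub.trans interior_subset)
  -- find a neighborhood T of 1 with W * T ⊆ W
  have hWT : ∃ T ∈ 𝓝 (1 : Q), W * T ⊆ W := by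
    apply hWcompact.induction_on (p := fun S ↦ ∃ T ∈ 𝓝 (1 : Q), S * T ⊆ W)
      ⟨Set.univ, by simp only [univ_mem, empty_mul, empty_subset, and_self]⟩
      (fun _ _ huv ⟨T, hT, mem⟩ ↦ ⟨T, hT, (mul_subset_mul_right huv).trans mem⟩)
      (fun U V ⟨T₁, hT₁, mem1⟩ ⟨T₂, hT₂, mem2⟩ ↦ ⟨T₁ ∩ T₂, inter_mem hT₁ hT₂, by
        rw [union_mul]
        exact union_subset (mul_subset_mul_left inter_subset_left |>.trans mem1)
          (mul_subset_mul_left inter_subset_right |>.trans mem2)⟩)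
    intro x memW
    have hx1 : (x, 1) ∈ (fun p : Q × Q ↦ p.1 * p.2) ⁻¹' W := by simp [memW]
    rcases isOpen_prod_iff.mp (continuous_mul.isOpen_preimage W hWclopen.2) x 1 hx1 with
      ⟨U, V, Uopen, Vopen, xmemU, onememV, prodsub⟩
    have h6 : U * V ⊆ W := mul_subset_iff.mpr fun _ hx _ hy ↦ prodsub (mk_mem_prod hx hy)
    exact ⟨U ∩ W, ⟨U, Uopen.mem_nhds xmemU, W, fun _ a ↦ a, rfl⟩,
      V, Vopen.mem_nhds onememV, fun _ a ↦ h6 ((mul_subset_mul_right inter_subset_left) a)⟩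
  obtain ⟨T, hTnhds, hWT⟩ := hWT
  obtain ⟨U, hUT, hUopen, h1U⟩ := mem_nhds_iff.mp hTnhds
  set V : Set Q := U ∩ U⁻¹ with hVdef
  have hVopen : IsOpen V := hUopen.inter hUopen.inv
  have h1V : (1 : Q) ∈ V := ⟨h1U, by simpa using h1U⟩
  have hVinv : V⁻¹ = V := by
    ext x
    simp only [hVdef, Set.mem_inv, Set.mem_inter_iff]
    constructor <;> rintro ⟨h1, h2⟩ <;> simp_all [Set.mem_inv]
  have hWV : W * V ⊆ W :=
    fun x hx ↦ hWT (mul_subset_mul_left (fun y hy ↦ hUT hy.1) hx)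
  have hVW : ∀ n : ℕ, V ^ (n + 1) ⊆ W := by
    intro n
    induction n with
    | zero => intro x hx; simpa using hWV (Set.mul_mem_mul h1W (by simpa using hx))
    | succ n ih =>
      rw [pow_succ]
      exact (mul_subset_mul_right ih).trans hWV
  let S : Subgroup Q :=
  { carrier := ⋃ n, V ^ (n + 1)
    mul_mem' := fun ha hb ↦ by
      rcases mem_iUnion.mp ha with ⟨k, hk⟩
      rcases mem_iUnion.mp hb with ⟨l, hl⟩
      exact mem_iUnion.mpr ⟨k + 1 + l, by
        rw [add_assoc, pow_add]; exact Set.mul_mem_mul hk hl⟩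
    one_mem' := mem_iUnion.mpr ⟨0, by simpa using h1V⟩
    inv_mem' := fun ha ↦ by
      rcases mem_iUnion.mp ha with ⟨k, hk⟩
      exact mem_iUnion.mpr ⟨k, by
        rw [← hVinv]
        simpa only [inv_pow, Set.mem_inv, inv_inv] using hk⟩ }
  have hSopen : IsOpen (S : Set Q) := by
    refine isOpen_iUnion fun n ↦ ?_
    rw [pow_succ]
    exact hVopen.mul_left
  have hSsub : (S : Set Q) ⊆ W := iUnion_subset fun n ↦ hVW n
  exact ⟨S, hSopen, hWcompact.of_isClosed_subset (S.isClosed_of_isOpen hSopen) hSsub⟩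


/-- If the quotient by a σ-compact subgroup is compact, the group is σ-compact. -/
lemma sigmaCompactSpace_of_compact_quotient {Γ : Type*} [TopologicalSpace Γ] [Group Γ]
    [IsTopologicalGroup Γ] [WeaklyLocallyCompactSpace Γ] (N : Subgroup Γ)
    (hN : IsSigmaCompact (N : Set Γ)) (hq : CompactSpace (Γ ⧸ N)) : SigmaCompactSpace Γ := by
  have h := fun x : Γ ↦ exists_compact_mem_nhds x
  choose K hKc hKn using h
  have hcover : (univ : Set (Γ ⧸ N)) ⊆ ⋃ x : Γ, QuotientGroup.mk '' interior (K x) := by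
    intro q _
    obtain ⟨x, rfl⟩ := QuotientGroup.mk_surjective q
    exact mem_iUnion.mpr ⟨x, ⟨x, mem_interior_iff_mem_nhds.mpr (hKn x), rfl⟩⟩
  obtain ⟨t, ht⟩ := isCompact_univ.elim_finite_subcover _
    (fun x ↦ QuotientGroup.isOpenMap_coe _ isOpen_interior) hcover
  obtain ⟨L, hLc, hLU⟩ := hN
  rw [← isSigmaCompact_univ_iff]
  have hC : IsCompact (⋃ x ∈ t, K x) := t.isCompact_biUnion fun x _ ↦ hKc x
  have huniv : (univ : Set Γ) = ⋃ m, (⋃ x ∈ t, K x) * L m := by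
    refine Subset.antisymm (fun g _ ↦ ?_) (subset_univ _)
    have hg : QuotientGroup.mk g ∈ ⋃ x ∈ t, QuotientGroup.mk '' interior (K x) :=
      ht (mem_univ _)
    obtain ⟨x, hxt, c, hc, hcg⟩ := by simpa using hg
    have hmem : c⁻¹ * g ∈ (N : Set Γ) := QuotientGroup.eq.mp hcg
    rw [← hLU] at hmem
    obtain ⟨m, hm⟩ := mem_iUnion.mp hmem
    have hgc : c * (c⁻¹ * g) = g := mul_inv_cancel_left c g
    exact mem_iUnion.mpr ⟨m, hgc ▸ Set.mul_mem_mul (mem_biUnion hxt (interior_subset hc)) hm⟩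
  rw [huniv]
  exact isSigmaCompact_iUnion _ fun m ↦ (hC.mul (hLc m)).isSigmaCompact

/-- Elements of an open subgroup whose value lies in the connected component of `1` lie in
the connected component of `1` of the subgroup. -/
lemma mem_connectedComponentOfOne_subtype {G : Type*} [TopologicalSpace G] [Group G]
    [IsTopologicalGroup G] (H : Subgroup G) (hopen : IsOpen (H : Set G)) (x : ↥H)
    (hx : (x : G) ∈ connectedComponent (1 : G)) :
    x ∈ Subgroup.connectedComponentOfOne ↥H := by
  have hNH : connectedComponent (1 : G) ⊆ (H : Set G) :=
    IsClopen.connectedComponent_subset ⟨H.isClosed_of_isOpen hopen, hopen⟩ (one_mem H)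
  have hpre : IsPreconnected ((Subtype.val : ↥H → G) ⁻¹' connectedComponent (1 : G)) :=
    isPreconnected_connectedComponent.preimage_of_isOpenMap Subtype.val_injective
      hopen.isOpenEmbedding_subtypeVal.isOpenMap (by rwa [Subtype.range_val])
  have h1 : (1 : ↥H) ∈ (Subtype.val : ↥H → G) ⁻¹' connectedComponent (1 : G) := by
    simp only [mem_preimage, Submonoid.coe_one]
    exact mem_connectedComponent
  exact hpre.subset_connectedComponent h1 (mem_preimage.mpr hx)


/-- (3) implies (1). -/
lemma sigma_of_almost_connected {G : Type*} [TopologicalSpace G] [Group G] [IsTopologicalGroup G]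
    [T2Space G] [LocallyCompactSpace G] (H : Subgroup G) (hopen : IsOpen (H : Set G))
    (hcount : Countable (G ⧸ H))
    (hcompact : CompactSpace (↥H ⧸ Subgroup.connectedComponentOfOne ↥H)) :
    SigmaCompactSpace G := by
  haveI : LocallyCompactSpace ↥H := hopen.locallyCompactSpace
  obtain ⟨P, hPopen, hPsigma⟩ := exists_isOpen_isSigmaCompact_subgroup ↥H
  set N' := Subgroup.connectedComponentOfOne ↥H with hN'
  have hsubP : (N' : Set ↥H) ⊆ (P : Set ↥H) :=
    IsClopen.connectedComponent_subset ⟨P.isClosed_of_isOpen hPopen, hPopen⟩ (one_mem P)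
  have hN'sigma : IsSigmaCompact (N' : Set ↥H) := by
    obtain ⟨C, hCc, hCU⟩ := hPsigma
    refine ⟨fun n ↦ C n ∩ (N' : Set ↥H), fun n ↦ (hCc n).inter_right isClosed_connectedComponent,
      ?_⟩
    rw [← Set.iUnion_inter, hCU]
    exact Set.inter_eq_right.mpr hsubP
  have hHsigma : SigmaCompactSpace ↥H :=
    sigmaCompactSpace_of_compact_quotient N' hN'sigma hcompact
  have hHset : IsSigmaCompact (H : Set G) := by
    have himg := (isSigmaCompact_univ (X := ↥H)).image continuous_subtype_val
    simpa using himg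
  exact sigmaCompactSpace_of_countable_index H hHset hcount

/-- (2) implies (3). -/
lemma exists_almost_connected {G : Type*} [TopologicalSpace G] [Group G] [IsTopologicalGroup G]
    [T2Space G] [LocallyCompactSpace G]
    (h2 : ∀ H : Subgroup G, IsOpen (H : Set G) → Countable (G ⧸ H)) :
    ∃ H : Subgroup G, IsOpen (H : Set G) ∧ Countable (G ⧸ H) ∧
      CompactSpace (↥H ⧸ Subgroup.connectedComponentOfOne ↥H) := by
  set N := Subgroup.connectedComponentOfOne G with hNdef
  haveI : IsClosed (N : Set G) := isClosed_connectedComponent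
  haveI : TotallyDisconnectedSpace (G ⧸ N) := totallyDisconnected_quotient G
  obtain ⟨K, hKopen, hKcompact⟩ := exists_compact_open_subgroup (G ⧸ N)
  set H : Subgroup G := K.comap (QuotientGroup.mk' N) with hHdef
  have hHopen : IsOpen (H : Set G) := by
    rw [hHdef, Subgroup.coe_comap]
    exact hKopen.preimage QuotientGroup.continuous_mk
  refine ⟨H, hHopen, h2 H hHopen, ?_⟩
  have hx : ∀ x : ↥H, ∃ C : Set G, C ∈ 𝓝 (x : G) ∧ C ⊆ (H : Set G) ∧ IsCompact C := by
    intro x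
    exact local_compact_nhds (hHopen.mem_nhds x.2)
  choose C hCn hCH hCc using hx
  have hKcover : (K : Set (G ⧸ N)) ⊆ ⋃ x : ↥H, QuotientGroup.mk '' interior (C x) := by
    intro q hq
    obtain ⟨g, rfl⟩ := QuotientGroup.mk_surjective q
    have hgH : g ∈ H := hq
    exact mem_iUnion.mpr ⟨⟨g, hgH⟩, ⟨g, mem_interior_iff_mem_nhds.mpr (hCn ⟨g, hgH⟩), rfl⟩⟩
  obtain ⟨t, ht⟩ := hKcompact.elim_finite_subcover _
    (fun x ↦ QuotientGroup.isOpenMap_coe _ isOpen_interior) hKcover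
  set D : Set G := ⋃ x ∈ t, C x with hDdef
  have hDc : IsCompact D := t.isCompact_biUnion fun x _ ↦ hCc x
  have hDH : D ⊆ (H : Set G) := iUnion₂_subset fun x _ ↦ hCH x
  set D' : Set ↥H := Subtype.val ⁻¹' D with hD'def
  have hD'c : IsCompact D' := by
    rw [Topology.IsEmbedding.subtypeVal.isCompact_iff]
    have himg : Subtype.val '' D' = D :=
      Subset.antisymm (image_preimage_subset _ _) fun d hd ↦ ⟨⟨d, hDH hd⟩, hd, rfl⟩
    rw [himg]
    exact hDc
  set N' := Subgroup.connectedComponentOfOne ↥H with hN'def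
  have hsurj : (univ : Set (↥H ⧸ N')) ⊆ QuotientGroup.mk '' D' := by
    intro q _
    obtain ⟨h, rfl⟩ := QuotientGroup.mk_surjective q
    have hhK : QuotientGroup.mk (h : G) ∈ (K : Set (G ⧸ N)) := h.2
    have hmem := ht hhK
    obtain ⟨x, hxt, hdmem⟩ := Set.mem_iUnion₂.mp hmem
    obtain ⟨d, hd, hdq⟩ := hdmem
    have hdD : d ∈ D := mem_biUnion hxt (interior_subset hd)
    have hdH : d ∈ H := hDH hdD
    have hdN : d⁻¹ * (h : G) ∈ N := QuotientGroup.eq.mp hdq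
    have helt : (⟨d, hdH⟩ : ↥H)⁻¹ * h ∈ N' :=
      mem_connectedComponentOfOne_subtype H hHopen _ hdN
    exact ⟨⟨d, hdH⟩, mem_preimage.mpr hdD, QuotientGroup.eq.mpr helt⟩
  refine ⟨?_⟩
  have huniv : (univ : Set (↥H ⧸ N')) = QuotientGroup.mk '' D' :=
    Subset.antisymm hsurj (subset_univ _)
  rw [huniv]
  exact hD'c.image continuous_quotient_mk'

end SigmaTFAE

/-- For a locally compact Hausdorff topological group `G`, the following are
equivalent: (1) `G` is σ-compact; (2) every open subgroup of `G` has countable index;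
(3) `G` has an open subgroup of countable index which is almost connected (i.e. the quotient
of the subgroup by its identity component is compact). -/
theorem sigmaCompact_tfae (G : Type*) [TopologicalSpace G] [Group G] [IsTopologicalGroup G]
    [T2Space G] [LocallyCompactSpace G] :
    List.TFAE
      [SigmaCompactSpace G,
       ∀ H : Subgroup G, IsOpen (H : Set G) → Countable (G ⧸ H),
       ∃ H : Subgroup G, IsOpen (H : Set G) ∧ Countable (G ⧸ H) ∧
         CompactSpace (↥H ⧸ Subgroup.connectedComponentOfOne ↥H)] := by
  tfae_have 1 → 2 := by
    intro h H hH
    haveI := h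
    exact SigmaTFAE.countable_index_of_sigmaCompact H hH
  tfae_have 2 → 3 := by
    intro h2
    exact SigmaTFAE.exists_almost_connected h2
  tfae_have 3 → 1 := by
    rintro ⟨H, h1, h2, h3⟩
    exact SigmaTFAE.sigma_of_almost_connected H h1 h2 h3
  tfae_finish
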